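/- Let G be a finite simple graph, let (T,𝒱) be a tree decomposition of G, let x be a vertex of T of degree k ≥ 4, and let (T',𝒱') be a splitting of (T,𝒱) with respect to x. Then (T',𝒱') is a tree decomposition of G, the width of (T',𝒱') equals the width of (T,𝒱), and the number of vertices of T' of degree greater than 3 equals the number of vertices of T of degree greater than 3 minus one. -/

import Mathlib

open SimpleGraph

/-- `(Gt, bags)` is a tree decomposition of `G`: `Gt` is a tree; every vertex of `G` lies in
some bag; every edge of `G` is covered by some bag; and whenever `t₂` lies on the (unique)
path of `Gt` between `t₁` and `t₃`, the intersection of the bags of `t₁` and `t₃` is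
contained in the bag of `t₂`. -/
def IsTreeDecomp {V α : Type} (G : SimpleGraph V) (Gt : SimpleGraph α)
    (bags : α → Set V) : Prop :=
  Gt.IsTree ∧
  (∀ v : V, ∃ t, v ∈ bags t) ∧
  (∀ v w : V, G.Adj v w → ∃ t, v ∈ bags t ∧ w ∈ bags t) ∧
  (∀ (t₁ t₂ t₃ : α) (p : Gt.Walk t₁ t₃), p.IsPath → t₂ ∈ p.support →
    bags t₁ ∩ bags t₃ ⊆ bags t₂)

/-- The width `max_t |V_t| − 1` (as an integer) of a decomposition with bags `bags`. -/
noncomputable def decompWidth {V α : Type} (bags : α → Set V) : ℤ :=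
  ((sSup (Set.range fun t => (bags t).ncard) : ℕ) : ℤ) - 1

/-- The adjacency relation of the splitting of the tree `Gt` at the vertex `x`, whose
neighbours are enumerated by `e : Fin k → α`: `x` is replaced by a path `x₁ — x₂ — ⋯ — x_k`
of `k` new vertices, the `i`-th neighbour `e i` is joined to `xᵢ`, and all edges of `Gt` not
incident to `x` are kept. -/
def splitAdj {α : Type} (Gt : SimpleGraph α) (x : α) (k : ℕ) (e : Fin k → α) :
    ({y : α // y ≠ x} ⊕ Fin k) → ({y : α // y ≠ x} ⊕ Fin k) → Prop
  | Sum.inl y, Sum.inl z => Gt.Adj y.1 z.1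
  | Sum.inl y, Sum.inr i => y.1 = e i
  | Sum.inr i, Sum.inl y => y.1 = e i
  | Sum.inr i, Sum.inr j => (i : ℕ) + 1 = (j : ℕ) ∨ (j : ℕ) + 1 = (i : ℕ)

/-- The graph obtained by splitting `Gt` at `x` (with neighbours enumerated by `e`). -/
def splitGraph {α : Type} (Gt : SimpleGraph α) (x : α) (k : ℕ) (e : Fin k → α) :
    SimpleGraph ({y : α // y ≠ x} ⊕ Fin k) where
  Adj := splitAdj Gt x k e
  symm := ⟨by
    rintro (y | i) (z | j) h <;> simp only [splitAdj] at h ⊢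
    · exact Gt.adj_symm h
    · exact h
    · exact h
    · omega⟩
  loopless := ⟨by
    rintro (y | i) h <;> simp only [splitAdj] at h
    · exact Gt.irrefl h
    · omega⟩


namespace SplitAux
variable {α : Type} {Gt : SimpleGraph α} {x : α} {k : ℕ} {e : Fin k → α}
abbrev pr (x : α) : ({y : α // y ≠ x} ⊕ Fin k) → α
  | Sum.inl y => y.1
  | Sum.inr _ => x
lemma adj_inl_inl {y z : {y : α // y ≠ x}} (h : (splitGraph Gt x k e).Adj (Sum.inl y) (Sum.inl z)) :
    Gt.Adj y.1 z.1 := h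
lemma adj_inl_inr {y : {y : α // y ≠ x}} {i : Fin k} (h : (splitGraph Gt x k e).Adj (Sum.inl y) (Sum.inr i)) :
    y.1 = e i := h
lemma adj_inr_inl {y : {y : α // y ≠ x}} {i : Fin k} (h : (splitGraph Gt x k e).Adj (Sum.inr i) (Sum.inl y)) :
    y.1 = e i := h
lemma adj_inr_inr {i j : Fin k} (h : (splitGraph Gt x k e).Adj (Sum.inr i) (Sum.inr j)) :
    (i : ℕ) + 1 = (j : ℕ) ∨ (j : ℕ) + 1 = (i : ℕ) := h
variable (headj : ∀ i, Gt.Adj x (e i))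
def proj : ∀ {s t : ({y : α // y ≠ x} ⊕ Fin k)}, (splitGraph Gt x k e).Walk s t →
    Gt.Walk (pr x s) (pr x t)
  | _, _, Walk.nil => Walk.nil
  | _, _, @Walk.cons _ _ (Sum.inl y) (Sum.inl z) _ h q => Walk.cons (adj_inl_inl h) (proj q)
  | _, _, @Walk.cons _ _ (Sum.inl y) (Sum.inr i) _ h q =>
      Walk.cons (show Gt.Adj y.1 x by rw [adj_inl_inr h]; exact (headj i).symm) (proj q)
  | _, _, @Walk.cons _ _ (Sum.inr i) (Sum.inl y) _ h q =>
      Walk.cons (show Gt.Adj x y.1 by rw [adj_inr_inl h]; exact headj i) (proj q)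
  | _, _, @Walk.cons _ _ (Sum.inr i) (Sum.inr j) _ h q => (proj q).copy rfl rfl

@[simp] lemma proj_nil {s} : proj (e := e) headj (Walk.nil (u := s)) = Walk.nil := by
  cases s <;> rfl
@[simp] lemma proj_cons_il_il {y z : {y : α // y ≠ x}} {t} (h) (q : (splitGraph Gt x k e).Walk (Sum.inl z) t) :
    proj headj (Walk.cons (u := Sum.inl y) h q) = Walk.cons (adj_inl_inl h) (proj headj q) := rfl
@[simp] lemma proj_cons_il_ir {y : {y : α // y ≠ x}} {i : Fin k} {t} (h) (q : (splitGraph Gt x k e).Walk (Sum.inr i) t) :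
    proj headj (Walk.cons (u := Sum.inl y) h q) =
      Walk.cons (show Gt.Adj y.1 x by rw [adj_inl_inr h]; exact (headj i).symm) (proj headj q) := rfl
@[simp] lemma proj_cons_ir_il {y : {y : α // y ≠ x}} {i : Fin k} {t} (h) (q : (splitGraph Gt x k e).Walk (Sum.inl y) t) :
    proj headj (Walk.cons (u := Sum.inr i) h q) =
      Walk.cons (show Gt.Adj x y.1 by rw [adj_inr_inl h]; exact headj i) (proj headj q) := rfl
@[simp] lemma proj_cons_ir_ir {i j : Fin k} {t} (h) (q : (splitGraph Gt x k e).Walk (Sum.inr j) t) :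
    proj headj (Walk.cons (u := Sum.inr i) h q) = proj headj q := rfl
end SplitAux

namespace SplitAux
variable {α : Type} {Gt : SimpleGraph α} {x : α} {k : ℕ} {e : Fin k → α}
variable (headj : ∀ i, Gt.Adj x (e i))

lemma mem_support_proj {s t} (q : (splitGraph Gt x k e).Walk s t) :
    ∀ u ∈ q.support, pr x u ∈ (proj headj q).support := by
  induction q with
  | nil =>
    intro u hu; rw [Walk.support_nil, List.mem_singleton] at hu; subst hu; simp
  | @cons a b c h q ih =>
    intro u hu
    rw [Walk.support_cons, List.mem_cons] at hu
    rcases a with y | i <;> rcases b with z | j <;>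
      simp only [proj_cons_il_il, proj_cons_il_ir, proj_cons_ir_il, proj_cons_ir_ir,
        Walk.support_cons, List.mem_cons] <;>
      rcases hu with rfl | hu
    · exact Or.inl rfl
    · exact Or.inr (ih u hu)
    · exact Or.inl rfl
    · exact Or.inr (ih u hu)
    · exact Or.inl rfl
    · exact Or.inr (ih u hu)
    · exact (proj headj q).start_mem_support
    · exact ih u hu

lemma support_proj_sub {s t} (q : (splitGraph Gt x k e).Walk s t) :
    ∀ a ∈ (proj headj q).support, ∃ u ∈ q.support, pr x u = a := by
  induction q with
  | nil =>
    intro a ha; rw [proj_nil, Walk.support_nil, List.mem_singleton] at ha; subst ha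
    exact ⟨_, Walk.start_mem_support _, rfl⟩
  | @cons a b c h q ih =>
    intro u hu
    rcases a with y | i <;> rcases b with z | j <;>
      simp only [proj_cons_il_il, proj_cons_il_ir, proj_cons_ir_il, proj_cons_ir_ir,
        Walk.support_cons, List.mem_cons] at hu
    case inl.inl =>
      rcases hu with rfl | hu
      · exact ⟨_, Walk.start_mem_support _, rfl⟩
      · obtain ⟨w, hw, hw'⟩ := ih u hu; exact ⟨w, by rw [Walk.support_cons]; exact List.mem_cons_of_mem _ hw, hw'⟩
    case inl.inr =>
      rcases hu with rfl | hu
      · exact ⟨_, Walk.start_mem_support _, rfl⟩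
      · obtain ⟨w, hw, hw'⟩ := ih u hu; exact ⟨w, by rw [Walk.support_cons]; exact List.mem_cons_of_mem _ hw, hw'⟩
    case inr.inl =>
      rcases hu with rfl | hu
      · exact ⟨_, Walk.start_mem_support _, rfl⟩
      · obtain ⟨w, hw, hw'⟩ := ih u hu; exact ⟨w, by rw [Walk.support_cons]; exact List.mem_cons_of_mem _ hw, hw'⟩
    case inr.inr =>
      obtain ⟨w, hw, hw'⟩ := ih u hu; exact ⟨w, by rw [Walk.support_cons]; exact List.mem_cons_of_mem _ hw, hw'⟩

lemma proj_notin_x {s t} (q : (splitGraph Gt x k e).Walk s t)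
    (h : ∀ i : Fin k, Sum.inr i ∉ q.support) : x ∉ (proj headj q).support := by
  intro hx
  obtain ⟨u, hu, hu'⟩ := support_proj_sub headj q x hx
  rcases u with y | i
  · exact y.2 hu'
  · exact h i hu

lemma no_inr_of_proj {s t} (q : (splitGraph Gt x k e).Walk s t)
    (h : x ∉ (proj headj q).support) : ∀ i : Fin k, Sum.inr i ∉ q.support := by
  intro i hi
  exact h (mem_support_proj headj q _ hi)

lemma proj_length {s t} (q : (splitGraph Gt x k e).Walk s t)
    (h : ∀ i : Fin k, Sum.inr i ∉ q.support) : (proj headj q).length = q.length := by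
  induction q with
  | nil => simp
  | @cons a b c hadj q ih =>
    rcases a with y | i <;> rcases b with z | j
    · simp only [proj_cons_il_il, Walk.length_cons, Nat.add_left_inj]
      exact ih fun i hi => h i (by rw [Walk.support_cons]; exact List.mem_cons_of_mem _ hi)
    · exact absurd (by rw [Walk.support_cons]; exact List.mem_cons_of_mem _ q.start_mem_support)
        (h j)
    · exact absurd (Walk.cons hadj q).start_mem_support (h i)
    · exact absurd (Walk.cons hadj q).start_mem_support (h i)

/-- a `Gt`-walk between two distinct neighbours of `x` avoiding `x` contradicts acyclicity. -/
lemma no_avoid (headj : ∀ i, Gt.Adj x (e i)) (hac : Gt.IsAcyclic) (he : Function.Injective e) {i j : Fin k} (hij : i ≠ j)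
    (W : Gt.Walk (e i) (e j)) (hW : x ∉ W.support) : False := by
  classical
  have hinj : e i ≠ e j := fun hh => hij (he hh)
  have hp2 : (Walk.cons (headj i).symm (Walk.cons (headj j) Walk.nil)).IsPath := by
    simp [Walk.cons_isPath_iff, hinj, (headj i).ne', (headj j).ne', (headj j).ne]
  have huniq := hac.path_unique ⟨W.bypass, W.bypass_isPath⟩ ⟨_, hp2⟩
  have hx : x ∈ W.bypass.support := by
    have : W.bypass = Walk.cons (headj i).symm (Walk.cons (headj j) Walk.nil) :=
      congrArg Subtype.val huniq
    rw [this]; simp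
  exact hW (W.support_bypass_subset hx)
end SplitAux


namespace SplitAux
variable {α : Type} {Gt : SimpleGraph α} {x : α} {k : ℕ} {e : Fin k → α}
variable (headj : ∀ i, Gt.Adj x (e i))

lemma exists_first_entry (headj : ∀ i, Gt.Adj x (e i)) {s t} (w : (splitGraph Gt x k e).Walk s t) :
    ∀ (y : {y : α // y ≠ x}) (j : Fin k), s = Sum.inl y → t = Sum.inr j →
    ∃ (j' : Fin k) (hj' : e j' ≠ x)
      (w₁ : (splitGraph Gt x k e).Walk (Sum.inl y) (Sum.inl ⟨e j', hj'⟩)),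
      (∀ u ∈ w₁.support, ∀ i : Fin k, u ≠ Sum.inr i) ∧
      s(Sum.inl ⟨e j', hj'⟩, (Sum.inr j' : {y : α // y ≠ x} ⊕ Fin k)) ∈ w.edges := by
  induction w with
  | nil => rintro y j rfl h; exact absurd h (by simp)
  | @cons a b c h q ih =>
    rintro y j rfl rfl
    rcases b with z | i
    · obtain ⟨j', hj', w₁, hall, hedge⟩ := ih z j rfl rfl
      refine ⟨j', hj', Walk.cons h w₁, ?_, ?_⟩
      · intro u hu i
        rw [Walk.support_cons, List.mem_cons] at hu
        rcases hu with rfl | hu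
        · simp
        · exact hall u hu i
      · rw [Walk.edges_cons]; exact List.mem_cons_of_mem _ hedge
    · have hy : y = ⟨e i, (headj i).ne'⟩ := Subtype.ext (adj_inl_inr h)
      refine ⟨i, (headj i).ne', Walk.nil.copy rfl (by rw [hy]), ?_, ?_⟩
      · intro u hu i'
        rw [Walk.support_copy, Walk.support_nil, List.mem_singleton] at hu
        subst hu; simp
      · rw [Walk.edges_cons]
        have heq : s(Sum.inl (⟨e i, (headj i).ne'⟩ : {y : α // y ≠ x}),
            (Sum.inr i : {y : α // y ≠ x} ⊕ Fin k)) = s(Sum.inl y, Sum.inr i) := by rw [hy]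
        rw [heq]; exact List.mem_cons_self

lemma no_escape (headj : ∀ i, Gt.Adj x (e i)) (hac : Gt.IsAcyclic) (he : Function.Injective e)
    {z : {y : α // y ≠ x}} {i : Fin k} (hz : z.1 = e i) {t}
    (q : (splitGraph Gt x k e).Walk (Sum.inl z) t) {j : Fin k}
    (hj : Sum.inr j ∈ q.support) (hi : Sum.inr i ∉ q.support) : False := by
  classical
  obtain ⟨j', hj', w₁, hall, hedge⟩ := exists_first_entry headj (q.takeUntil _ hj) z j rfl rfl
  have hjq : Sum.inr j' ∈ q.support :=
    q.support_takeUntil_subset hj (Walk.snd_mem_support_of_mem_edges _ hedge)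
  have hne : i ≠ j' := fun hh => hi (hh ▸ hjq)
  have hW : x ∉ ((proj headj w₁).copy (show pr x (Sum.inl z) = e i from hz) rfl).support := by
    rw [Walk.support_copy]
    exact proj_notin_x headj w₁ (fun i' hi' => (hall _ hi' i') rfl)
  exact no_avoid headj hac he hne _ hW

lemma no_out_and_back (headj : ∀ i, Gt.Adj x (e i)) (hac : Gt.IsAcyclic) (he : Function.Injective e)
    {y : {y : α // y ≠ x}} {i : Fin k} (hy : y.1 = e i)
    (w : (splitGraph Gt x k e).Walk (Sum.inl y) (Sum.inr i))
    (hedge : s((Sum.inl y : {y : α // y ≠ x} ⊕ Fin k), Sum.inr i) ∉ w.edges) : False := by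
  obtain ⟨j', hj', w₁, hall, hedge'⟩ := exists_first_entry headj w y i rfl rfl
  by_cases hji : j' = i
  · subst hji
    have hyy : (⟨e j', hj'⟩ : {y : α // y ≠ x}) = y := Subtype.ext hy.symm
    rw [hyy] at hedge'
    exact hedge hedge'
  · have hW : x ∉ ((proj headj w₁).copy (show pr x (Sum.inl y) = e i from hy) rfl).support := by
      rw [Walk.support_copy]
      exact proj_notin_x headj w₁ (fun i' hi' => (hall _ hi' i') rfl)
    exact no_avoid headj hac he (fun hh => hji hh.symm) _ hW

lemma all_inr (headj : ∀ i, Gt.Adj x (e i)) (hac : Gt.IsAcyclic) (he : Function.Injective e) :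
    ∀ {s t} (w : (splitGraph Gt x k e).Walk s t), w.IsPath →
    ∀ (i j : Fin k), s = Sum.inr i → t = Sum.inr j →
    ∀ u ∈ w.support, ∃ j', u = Sum.inr j' := by
  intro s t w
  induction w with
  | nil => rintro _ i j rfl _ u hu
           rw [Walk.support_nil, List.mem_singleton] at hu; exact ⟨i, hu⟩
  | @cons a b c h q ih =>
    rintro hp i j rfl rfl u hu
    rw [Walk.cons_isPath_iff] at hp
    rcases b with z | i₂
    · exact (no_escape headj hac he (adj_inr_inl h) q q.end_mem_support hp.2).elim
    · rw [Walk.support_cons, List.mem_cons] at hu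
      rcases hu with rfl | hu
      · exact ⟨i, rfl⟩
      · exact ih hp.1 i₂ j rfl rfl u hu

lemma proj_isPath (headj : ∀ i, Gt.Adj x (e i)) (hac : Gt.IsAcyclic) (he : Function.Injective e) :
    ∀ {s t} (p : (splitGraph Gt x k e).Walk s t), p.IsPath → (proj headj p).IsPath := by
  intro s t p
  induction p with
  | nil => intro _; rw [proj_nil]; exact Walk.IsPath.nil
  | @cons a b c h q ih =>
    intro hp
    rw [Walk.cons_isPath_iff] at hp
    obtain ⟨hq, ha⟩ := hp
    rcases a with y | i <;> rcases b with z | j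
    · rw [proj_cons_il_il, Walk.cons_isPath_iff]
      refine ⟨ih hq, fun hx' => ?_⟩
      obtain ⟨u, hu, hu'⟩ := support_proj_sub headj q _ hx'
      rcases u with y' | i'
      · exact ha ((Subtype.ext (hu' : y'.1 = y.1) : y' = y) ▸ hu)
      · exact y.2 ((hu' : x = y.1).symm)
    · rw [proj_cons_il_ir, Walk.cons_isPath_iff]
      refine ⟨ih hq, fun hx' => ?_⟩
      obtain ⟨u, hu, hu'⟩ := support_proj_sub headj q _ hx'
      rcases u with y' | i'
      · exact ha ((Subtype.ext (hu' : y'.1 = y.1) : y' = y) ▸ hu)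
      · exact y.2 ((hu' : x = y.1).symm)
    · rw [proj_cons_ir_il, Walk.cons_isPath_iff]
      refine ⟨ih hq, fun hx' => ?_⟩
      obtain ⟨u, hu, hu'⟩ := support_proj_sub headj q _ hx'
      rcases u with y' | i'
      · exact y'.2 hu'
      · exact no_escape headj hac he (adj_inr_inl h) q hu ha
    · rw [proj_cons_ir_ir]
      exact ih hq

lemma block_edge_mem : ∀ {s t} (w : (splitGraph Gt x k e).Walk s t),
    (∀ u ∈ w.support, ∃ j', u = Sum.inr j') → ∀ (m a : Fin k), s = Sum.inr m → t = Sum.inr a →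
    ∀ (h1 : (a : ℕ) < (m : ℕ)),
    s((Sum.inr ⟨(a : ℕ) + 1, lt_of_le_of_lt h1 m.isLt⟩ : {y : α // y ≠ x} ⊕ Fin k), Sum.inr a)
      ∈ w.edges := by
  intro s t w
  induction w with
  | nil => rintro _ m a rfl ht h1
           obtain rfl : m = a := Sum.inr.inj ht
           exact absurd h1 (lt_irrefl _)
  | @cons s' b c h q ih =>
    rintro hall m a rfl rfl h1
    obtain ⟨i₂, rfl⟩ := hall b (by rw [Walk.support_cons]; exact List.mem_cons_of_mem _ q.start_mem_support)
    have hadj := adj_inr_inr h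
    by_cases hca : i₂ = a
    · subst hca
      have hm : (m : ℕ) = (i₂ : ℕ) + 1 := by omega
      have : (Sum.inr (⟨(i₂ : ℕ) + 1, lt_of_le_of_lt h1 m.isLt⟩ : Fin k) :
          {y : α // y ≠ x} ⊕ Fin k) = Sum.inr m := by
        congr 1; exact Fin.ext hm.symm
      rw [Walk.edges_cons, this]
      exact List.mem_cons_self
    · have h2 : (a : ℕ) < (i₂ : ℕ) := by
        rcases hadj with h' | h' <;> [omega; (exact by omega)]
      have := ih (fun u hu => hall u (by rw [Walk.support_cons]; exact List.mem_cons_of_mem _ hu))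
        i₂ a rfl rfl h2
      rw [Walk.edges_cons]
      exact List.mem_cons_of_mem _ this
end SplitAux


namespace SplitAux
variable {α : Type} {Gt : SimpleGraph α} {x : α} {k : ℕ} {e : Fin k → α}

lemma split_isAcyclic (headj : ∀ i, Gt.Adj x (e i)) (hac : Gt.IsAcyclic)
    (he : Function.Injective e) : (splitGraph Gt x k e).IsAcyclic := by
  intro v c hc
  have hlen := hc.three_le_length
  cases c with
  | nil => simp at hlen
  | @cons _ b _ h q =>
    rw [Walk.cons_isCycle_iff] at hc
    obtain ⟨hq, hedge⟩ := hc
    rw [Walk.length_cons] at hlen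
    rcases v with y | i <;> rcases b with z | j
    · -- inl-inl
      have hP2 : (Walk.cons (adj_inl_inl h).symm Walk.nil : Gt.Walk z.1 y.1).IsPath := by
        simp [Walk.cons_isPath_iff, (adj_inl_inl h).ne']
      have huniq := hac.path_unique ⟨proj headj q, proj_isPath headj hac he q hq⟩ ⟨_, hP2⟩
      have hpq : (proj headj q) = Walk.cons (adj_inl_inl h).symm Walk.nil :=
        congrArg Subtype.val huniq
      have hlen1 : (proj headj q).length = 1 := by rw [hpq]; simp
      have hnoinr : ∀ i : Fin k, Sum.inr i ∉ q.support := by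
        intro i hi
        have hxmem := mem_support_proj headj q _ hi
        rw [hpq] at hxmem
        simp only [Walk.support_cons, Walk.support_nil, List.mem_cons, List.mem_singleton] at hxmem
        rcases hxmem with hh | hh | hh
        · exact z.2 ((hh : x = z.1).symm)
        · exact y.2 ((hh : x = y.1).symm)
        · simp at hh
      have := proj_length headj q hnoinr
      omega
    · -- inl-inr
      refine no_out_and_back headj hac he (adj_inl_inr h) q.reverse ?_
      rw [Walk.edges_reverse, List.mem_reverse]
      exact hedge
    · -- inr-inl
      refine no_out_and_back headj hac he (adj_inr_inl h) q ?_
      intro hmem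
      exact hedge (Sym2.eq_swap ▸ hmem)
    · -- inr-inr
      have hall := all_inr headj hac he q hq j i rfl rfl
      rcases adj_inr_inr h with hj1 | hj1
      · have hlt : (i : ℕ) < (j : ℕ) := by omega
        have hmem := block_edge_mem q hall j i rfl rfl hlt
        apply hedge
        have hcast : (Sum.inr (⟨(i : ℕ) + 1, lt_of_le_of_lt hlt j.isLt⟩ : Fin k) :
            {y : α // y ≠ x} ⊕ Fin k) = Sum.inr j := by
          congr 1; exact Fin.ext hj1
        rw [hcast] at hmem
        rw [Sym2.eq_swap]
        exact hmem
      · have hlt : (j : ℕ) < (i : ℕ) := by omega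
        have hall' : ∀ u ∈ q.reverse.support, ∃ j', u = Sum.inr j' := by
          intro u hu
          rw [Walk.support_reverse, List.mem_reverse] at hu
          exact hall u hu
        have hmem := block_edge_mem q.reverse hall' i j rfl rfl hlt
        apply hedge
        have hcast : (Sum.inr (⟨(j : ℕ) + 1, lt_of_le_of_lt hlt i.isLt⟩ : Fin k) :
            {y : α // y ≠ x} ⊕ Fin k) = Sum.inr i := by
          congr 1; exact Fin.ext hj1
        rw [hcast, Walk.edges_reverse, List.mem_reverse] at hmem
        exact hmem
end SplitAux


namespace SplitAux
variable {α : Type} {Gt : SimpleGraph α} {x : α} {k : ℕ} {e : Fin k → α}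

def blk0 (hk0 : 0 < k) : ∀ (n : ℕ) (hn : n < k),
    (splitGraph Gt x k e).Walk (Sum.inr ⟨n, hn⟩) (Sum.inr ⟨0, hk0⟩)
  | 0, _ => Walk.nil
  | n + 1, hn =>
      Walk.cons (show (splitGraph Gt x k e).Adj (Sum.inr ⟨n + 1, hn⟩)
        (Sum.inr ⟨n, by omega⟩) from Or.inr rfl) (blk0 hk0 n (by omega))

lemma blk0_support (hk0 : 0 < k) : ∀ (n : ℕ) (hn : n < k)
    (u : {y : α // y ≠ x} ⊕ Fin k),
    u ∈ (blk0 (Gt := Gt) (x := x) (e := e) hk0 n hn).support → ∃ j : Fin k, u = Sum.inr j := by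
  intro n
  induction n with
  | zero => intro hn u hu
            rw [blk0, Walk.support_nil, List.mem_singleton] at hu; exact ⟨_, hu⟩
  | succ n ih =>
    intro hn u hu
    rw [blk0, Walk.support_cons, List.mem_cons] at hu
    rcases hu with rfl | hu
    · exact ⟨_, rfl⟩
    · exact ih _ u hu

def blkW (hk0 : 0 < k) (i j : Fin k) :
    (splitGraph Gt x k e).Walk (Sum.inr i) (Sum.inr j) :=
  (blk0 hk0 i.1 i.2).append (blk0 hk0 j.1 j.2).reverse

lemma blkW_support (hk0 : 0 < k) (i j : Fin k) (u : {y : α // y ≠ x} ⊕ Fin k)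
    (hu : u ∈ (blkW (Gt := Gt) (x := x) (e := e) hk0 i j).support) :
    ∃ j' : Fin k, u = Sum.inr j' := by
  rw [blkW, Walk.mem_support_append_iff] at hu
  rcases hu with hu | hu
  · exact blk0_support hk0 _ _ u hu
  · rw [Walk.support_reverse, List.mem_reverse] at hu
    exact blk0_support hk0 _ _ u hu

open Classical in
noncomputable def iot (x : α) (hk0 : 0 < k) (a : α) : {y : α // y ≠ x} ⊕ Fin k :=
  if h : a = x then Sum.inr ⟨0, hk0⟩ else Sum.inl ⟨a, h⟩

lemma iot_x (hk0 : 0 < k) : iot x hk0 x = Sum.inr ⟨0, hk0⟩ := by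
  unfold iot; exact dif_pos rfl
lemma iot_ne (hk0 : 0 < k) {a : α} (h : a ≠ x) : iot x hk0 a = Sum.inl ⟨a, h⟩ := by
  unfold iot; exact dif_neg h
lemma pr_iot (hk0 : 0 < k) (a : α) : pr x (iot x hk0 a) = a := by
  unfold iot; split
  · next h => exact h.symm
  · rfl

lemma exists_lift (hk0 : 0 < k) (headj : ∀ i, Gt.Adj x (e i))
    (hecov : ∀ y, Gt.Adj x y → ∃ i, e i = y) {a b : α} (q : Gt.Walk a b) :
    ∃ W : (splitGraph Gt x k e).Walk (iot x hk0 a) (iot x hk0 b),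
      ∀ u ∈ W.support, pr x u ∈ q.support := by
  induction q with
  | nil =>
    refine ⟨Walk.nil, fun u hu => ?_⟩
    rw [Walk.support_nil, List.mem_singleton] at hu; subst hu
    rw [pr_iot]; exact Walk.start_mem_support _
  | @cons a c b h q ih =>
    obtain ⟨W, hW⟩ := ih
    have hstep : ∃ S : (splitGraph Gt x k e).Walk (iot x hk0 a) (iot x hk0 c),
        ∀ u ∈ S.support, pr x u = a ∨ pr x u = c := by
      by_cases hax : a = x
      · have hcx : c ≠ x := fun hh => h.ne (hax.trans hh.symm)
        obtain ⟨i, hi⟩ := hecov c (hax ▸ h)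
        refine ⟨((blkW hk0 ⟨0, hk0⟩ i).append (Walk.cons
          (show (splitGraph Gt x k e).Adj (Sum.inr i) (Sum.inl ⟨c, hcx⟩) from hi.symm)
          Walk.nil)).copy (by rw [hax, iot_x hk0]) (by rw [iot_ne hk0 hcx]), fun u hu => ?_⟩
        rw [Walk.support_copy, Walk.mem_support_append_iff] at hu
        rcases hu with hu | hu
        · obtain ⟨j', rfl⟩ := blkW_support hk0 _ _ u hu
          exact Or.inl hax.symm
        · rw [Walk.support_cons, Walk.support_nil, List.mem_cons, List.mem_singleton] at hu
          rcases hu with rfl | rfl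
          · exact Or.inl hax.symm
          · exact Or.inr rfl
      · by_cases hcx : c = x
        · obtain ⟨i, hi⟩ := hecov a (hcx ▸ h.symm)
          refine ⟨(Walk.cons
            (show (splitGraph Gt x k e).Adj (Sum.inl ⟨a, hax⟩) (Sum.inr i) from hi.symm)
            (blkW hk0 i ⟨0, hk0⟩)).copy (by rw [iot_ne hk0 hax]) (by rw [hcx, iot_x hk0]),
            fun u hu => ?_⟩
          rw [Walk.support_copy, Walk.support_cons, List.mem_cons] at hu
          rcases hu with rfl | hu
          · exact Or.inl rfl
          · obtain ⟨j', rfl⟩ := blkW_support hk0 _ _ u hu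
            exact Or.inr hcx.symm
        · refine ⟨(Walk.cons
            (show (splitGraph Gt x k e).Adj (Sum.inl ⟨a, hax⟩) (Sum.inl ⟨c, hcx⟩) from h)
            Walk.nil).copy (by rw [iot_ne hk0 hax]) (by rw [iot_ne hk0 hcx]), fun u hu => ?_⟩
          rw [Walk.support_copy, Walk.support_cons, Walk.support_nil,
            List.mem_cons, List.mem_singleton] at hu
          rcases hu with rfl | rfl
          · exact Or.inl rfl
          · exact Or.inr rfl
    obtain ⟨S, hS⟩ := hstep
    refine ⟨S.append W, fun u hu => ?_⟩
    rw [Walk.mem_support_append_iff] at hu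
    rw [Walk.support_cons]
    rcases hu with hu | hu
    · rcases hS u hu with hh | hh
      · rw [hh]; exact List.mem_cons_self
      · rw [hh]; exact List.mem_cons_of_mem _ q.start_mem_support
    · exact List.mem_cons_of_mem _ (hW u hu)

lemma exists_to_iot (hk0 : 0 < k) (t : {y : α // y ≠ x} ⊕ Fin k) :
    ∃ W : (splitGraph Gt x k e).Walk t (iot x hk0 (pr x t)),
      ∀ u ∈ W.support, u = t ∨ ((∃ j : Fin k, u = Sum.inr j) ∧ ∃ i : Fin k, t = Sum.inr i) := by
  rcases t with y | i
  · refine ⟨Walk.nil.copy rfl (show Sum.inl y = iot x hk0 y.1 by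
      rw [iot_ne hk0 y.2]), fun u hu => ?_⟩
    rw [Walk.support_copy, Walk.support_nil, List.mem_singleton] at hu
    exact Or.inl hu
  · refine ⟨(blkW hk0 i ⟨0, hk0⟩).copy rfl (show Sum.inr ⟨0, hk0⟩ = iot x hk0 x from
      (iot_x hk0).symm), fun u hu => ?_⟩
    rw [Walk.support_copy] at hu
    exact Or.inr ⟨blkW_support hk0 _ _ u hu, i, rfl⟩

lemma split_connected (hk0 : 0 < k) (headj : ∀ i, Gt.Adj x (e i))
    (hecov : ∀ y, Gt.Adj x y → ∃ i, e i = y) (hconn : Gt.Connected) :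
    (splitGraph Gt x k e).Connected := by
  haveI : Nonempty ({y : α // y ≠ x} ⊕ Fin k) := ⟨Sum.inr ⟨0, hk0⟩⟩
  constructor
  intro t₁ t₂
  obtain ⟨W1, _⟩ := exists_to_iot (Gt := Gt) (e := e) hk0 t₁
  obtain ⟨W2, _⟩ := exists_to_iot (Gt := Gt) (e := e) hk0 t₂
  obtain ⟨q⟩ := hconn.preconnected (pr x t₁) (pr x t₂)
  obtain ⟨L, _⟩ := exists_lift hk0 headj hecov q
  exact ⟨W1.append (L.append W2.reverse)⟩
end SplitAux


namespace SplitAux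

lemma support_path_subset_walk {W : Type} {H : SimpleGraph W} (hac : H.IsAcyclic)
    {t₁ t₃ : W} (p q : H.Walk t₁ t₃) (hp : p.IsPath) : p.support ⊆ q.support := by
  classical
  have h := hac.path_unique ⟨p, hp⟩ ⟨q.bypass, q.bypass_isPath⟩
  intro u hu
  apply q.support_bypass_subset
  have hpq : p = q.bypass := congrArg Subtype.val h
  rwa [hpq] at hu
end SplitAux



open SplitAux in
theorem splitting_isTreeDecomp {V α : Type} [Fintype V] [Fintype α]
    (G : SimpleGraph V) (Gt : SimpleGraph α) (bags : α → Set V)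
    (h : IsTreeDecomp G Gt bags)
    (x : α) (k : ℕ) (hk : 4 ≤ k)
    (e : Fin k → α) (he : Function.Injective e)
    (headj : ∀ i, Gt.Adj x (e i))
    (hecov : ∀ y, Gt.Adj x y → ∃ i, e i = y) :
    IsTreeDecomp G (splitGraph Gt x k e)
        (Sum.elim (fun y : {y : α // y ≠ x} => bags y.1) fun _ : Fin k => bags x) ∧
    decompWidth (Sum.elim (fun y : {y : α // y ≠ x} => bags y.1) fun _ : Fin k => bags x)
        = decompWidth bags ∧
    {t : {y : α // y ≠ x} ⊕ Fin k | 3 < ((splitGraph Gt x k e).neighborSet t).ncard}.ncard + 1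
        = {t : α | 3 < (Gt.neighborSet t).ncard}.ncard := by
  classical
  obtain ⟨htree, hvert, hedgecov, hsep⟩ := h
  have hk0 : 0 < k := by omega
  have hac : Gt.IsAcyclic := htree.IsAcyclic
  have hconn : Gt.Connected := htree.isConnected
  set bags' : ({y : α // y ≠ x} ⊕ Fin k) → Set V :=
    Sum.elim (fun y : {y : α // y ≠ x} => bags y.1) fun _ : Fin k => bags x with hbags'
  have hbag : ∀ t, bags' t = bags (pr x t) := by rintro (y | i) <;> rfl
  have hbag_iot : ∀ a, bags' (iot x hk0 a) = bags a := by
    intro a; rw [hbag, pr_iot]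
  have hsac : (splitGraph Gt x k e).IsAcyclic := split_isAcyclic headj hac he
  refine ⟨⟨⟨split_connected hk0 headj hecov hconn, hsac⟩, ?_, ?_, ?_⟩, ?_, ?_⟩
  · -- vertex coverage
    intro v
    obtain ⟨a, ha⟩ := hvert v
    exact ⟨iot x hk0 a, by rw [hbag_iot]; exact ha⟩
  · -- edge coverage
    intro v w hvw
    obtain ⟨a, ha⟩ := hedgecov v w hvw
    exact ⟨iot x hk0 a, by rw [hbag_iot]; exact ha.1, by rw [hbag_iot]; exact ha.2⟩
  · -- separation
    intro t₁ t₂ t₃ p hp ht₂ v hv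
    obtain ⟨hv1, hv3⟩ := hv
    rw [hbag] at hv1 hv3
    obtain ⟨q0⟩ := hconn.preconnected (pr x t₁) (pr x t₃)
    have hq : ∀ a ∈ q0.bypass.support, v ∈ bags a := fun a ha =>
      hsep (pr x t₁) a (pr x t₃) q0.bypass q0.bypass_isPath ha ⟨hv1, hv3⟩
    obtain ⟨L, hL⟩ := exists_lift hk0 headj hecov q0.bypass
    obtain ⟨W1, hW1⟩ := exists_to_iot (Gt := Gt) (e := e) hk0 t₁
    obtain ⟨W3, hW3⟩ := exists_to_iot (Gt := Gt) (e := e) hk0 t₃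
    have hWs : ∀ u ∈ (W1.append (L.append W3.reverse)).support, v ∈ bags (pr x u) := by
      intro u hu
      rw [Walk.mem_support_append_iff] at hu
      rcases hu with hu | hu
      · rcases hW1 u hu with rfl | ⟨⟨j, rfl⟩, i, rfl⟩
        · exact hv1
        · exact hv1
      · rw [Walk.mem_support_append_iff] at hu
        rcases hu with hu | hu
        · exact hq _ (hL u hu)
        · rw [Walk.support_reverse, List.mem_reverse] at hu
          rcases hW3 u hu with rfl | ⟨⟨j, rfl⟩, i, rfl⟩
          · exact hv3
          · exact hv3
    have hsub := support_path_subset_walk hsac p (W1.append (L.append W3.reverse)) hp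
    rw [hbag]
    exact hWs t₂ (hsub ht₂)
  · -- width
    have hrange : (Set.range fun t : ({y : α // y ≠ x} ⊕ Fin k) => (bags' t).ncard)
        = Set.range fun a : α => (bags a).ncard := by
      ext n
      simp only [Set.mem_range]
      constructor
      · rintro ⟨t, rfl⟩
        rcases t with y | i
        · exact ⟨y.1, rfl⟩
        · exact ⟨x, rfl⟩
      · rintro ⟨a, rfl⟩
        by_cases hax : a = x
        · exact ⟨Sum.inr ⟨0, hk0⟩, by rw [hax]; simp [hbags']⟩
        · exact ⟨Sum.inl ⟨a, hax⟩, rfl⟩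
    unfold decompWidth
    rw [hrange]
  · -- degree count
    have hNx : (Gt.neighborSet x).ncard = k := by
      have hbij : Function.Bijective
          (fun i : Fin k => (⟨e i, headj i⟩ : Gt.neighborSet x)) := by
        constructor
        · intro i j hij
          exact he (congrArg Subtype.val hij)
        · rintro ⟨z, hz⟩
          obtain ⟨i, hi⟩ := hecov z hz
          exact ⟨i, Subtype.ext hi⟩
      calc (Gt.neighborSet x).ncard = Nat.card (Gt.neighborSet x) :=
            (Nat.card_coe_set_eq _).symm
        _ = Nat.card (Fin k) := (Nat.card_congr (Equiv.ofBijective _ hbij)).symm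
        _ = k := by simp
    have hxmem : x ∈ {t : α | 3 < (Gt.neighborSet t).ncard} := by
      simp only [Set.mem_setOf_eq, hNx]; omega
    have hinl : ∀ y : {y : α // y ≠ x},
        ((splitGraph Gt x k e).neighborSet (Sum.inl y)).ncard = (Gt.neighborSet y.1).ncard := by
      intro y
      have himg : pr x '' ((splitGraph Gt x k e).neighborSet (Sum.inl y))
          = Gt.neighborSet y.1 := by
        ext a
        constructor
        · rintro ⟨u, hu, rfl⟩
          rcases u with z | i
          · exact adj_inl_inl (Gt := Gt) (k := k) (e := e) hu
          · have : y.1 = e i := adj_inl_inr (Gt := Gt) (e := e) hu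
            exact (this ▸ (headj i)).symm
        · intro ha
          by_cases hax : a = x
          · obtain ⟨i, hi⟩ := hecov y.1 (hax ▸ ha.symm)
            exact ⟨Sum.inr i,
              (show (splitGraph Gt x k e).Adj (Sum.inl y) (Sum.inr i) from hi.symm), hax.symm⟩
          · exact ⟨Sum.inl ⟨a, hax⟩, ha, rfl⟩
      have hinj : Set.InjOn (pr x) ((splitGraph Gt x k e).neighborSet (Sum.inl y)) := by
        rintro (z | i) hu (z' | i') hu' huu
        · exact congrArg Sum.inl (Subtype.ext huu)
        · exact absurd huu z.2
        · exact absurd huu.symm z'.2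
        · exact congrArg Sum.inr (he ((adj_inl_inr (Gt := Gt) (e := e) hu).symm.trans (adj_inl_inr (Gt := Gt) (e := e) hu')))
      rw [← himg, Set.ncard_image_of_injOn hinj]
    have hinr : ∀ i : Fin k,
        ¬(3 < ((splitGraph Gt x k e).neighborSet (Sum.inr i)).ncard) := by
      intro i
      have hsub : (splitGraph Gt x k e).neighborSet (Sum.inr i) ⊆
          {Sum.inl ⟨e i, (headj i).ne'⟩,
           Sum.inr ⟨((i : ℕ) + 1) % k, Nat.mod_lt _ hk0⟩,
           Sum.inr ⟨((i : ℕ) - 1) % k, Nat.mod_lt _ hk0⟩} := by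
        rintro (z | j) hu
        · left
          exact congrArg Sum.inl (Subtype.ext (adj_inr_inl (Gt := Gt) (e := e) hu))
        · rcases adj_inr_inr (Gt := Gt) (x := x) (e := e) hu with h' | h'
          · right; left
            have hlt : (i : ℕ) + 1 < k := h' ▸ j.isLt
            exact congrArg Sum.inr (Fin.ext
              (show (j : ℕ) = ((i : ℕ) + 1) % k by rw [Nat.mod_eq_of_lt hlt]; omega))
          · right; right
            have hik := i.isLt
            have hlt : (i : ℕ) - 1 < k := by omega
            exact congrArg Sum.inr (Fin.ext
              (show (j : ℕ) = ((i : ℕ) - 1) % k by rw [Nat.mod_eq_of_lt hlt]; omega))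
      push_neg
      calc ((splitGraph Gt x k e).neighborSet (Sum.inr i)).ncard
          ≤ _ := Set.ncard_le_ncard hsub (Set.toFinite _)
        _ ≤ 3 := by
            refine le_trans (Set.ncard_insert_le _ _) ?_
            have h2 := Set.ncard_insert_le (Sum.inr (⟨((i : ℕ) + 1) % k, Nat.mod_lt _ hk0⟩ : Fin k) :
              {y : α // y ≠ x} ⊕ Fin k)
              ({Sum.inr ⟨((i : ℕ) - 1) % k, Nat.mod_lt _ hk0⟩} : Set ({y : α // y ≠ x} ⊕ Fin k))
            have h3 := Set.ncard_singleton (Sum.inr (⟨((i : ℕ) - 1) % k, Nat.mod_lt _ hk0⟩ : Fin k) :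
              {y : α // y ≠ x} ⊕ Fin k)
            omega
    have hset : {t : {y : α // y ≠ x} ⊕ Fin k |
          3 < ((splitGraph Gt x k e).neighborSet t).ncard}
        = Sum.inl '' {y : {y : α // y ≠ x} | 3 < (Gt.neighborSet y.1).ncard} := by
      ext t
      constructor
      · intro ht
        rcases t with y | i
        · exact ⟨y, by rw [Set.mem_setOf_eq, ← hinl]; exact ht, rfl⟩
        · exact absurd ht (hinr i)
      · rintro ⟨y, hy, rfl⟩
        rw [Set.mem_setOf_eq, hinl]
        exact hy
    rw [hset, Set.ncard_image_of_injective _ Sum.inl_injective]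
    have hval : Subtype.val '' {y : {y : α // y ≠ x} | 3 < (Gt.neighborSet y.1).ncard}
        = {t : α | 3 < (Gt.neighborSet t).ncard} \ {x} := by
      ext a
      constructor
      · rintro ⟨⟨a, hax⟩, ha, rfl⟩
        exact ⟨ha, hax⟩
      · rintro ⟨ha, hax⟩
        exact ⟨⟨a, hax⟩, ha, rfl⟩
    rw [← Set.ncard_image_of_injective _ Subtype.val_injective, hval,
      Set.ncard_diff_singleton_add_one hxmem (Set.toFinite _)]
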